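/- arXiv:1301.1861 — 3 statements merged into one kernel-verified Lean document; each statement's English description precedes it below -/
import Mathlib

section
/- Let K be a compact group, K₁,…,Kₙ subgroups of K such that K = (K₁K₂⋯Kₙ)^N for some positive integer N (every element of K is a product of N blocks, each block a product of one element from each Kᵢ in order). Let (V,τ) be a finite-dimensional unitary representation of K with no nonzero K-invariant vector. Then for any x ∈ V and any vectors yᵢ ∈ V with yᵢ invariant under Kᵢ for each i, we have ‖x‖ ≤ 2nN · max_{1≤i≤n} ‖x − yᵢ‖. -/
open scoped BigOperators

open MeasureTheory

/-- Lemma (Lafforgue-type averaging): if a compact group `K` is covered by `N`-fold products of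
blocks `K₁K₂⋯Kₙ` and `(V,τ)` is a finite-dimensional unitary representation of `K` with no
nonzero invariant vector, then for any `x ∈ V` and vectors `yᵢ` invariant under `Kᵢ`,
`‖x‖ ≤ 2nN · max_i ‖x − yᵢ‖`. -/
theorem norm_le_of_generated_subgroups
    (K : Type*) [Group K] [TopologicalSpace K] [IsTopologicalGroup K] [CompactSpace K]
    (n N : ℕ) (hn : 0 < n) (hN : 0 < N) (K' : Fin n → Subgroup K)
    (hgen : ∀ k : K, ∃ f : Fin N → Fin n → K, (∀ b i, f b i ∈ K' i) ∧
      k = (List.ofFn fun b : Fin N => (List.ofFn fun i : Fin n => f b i).prod).prod)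
    (V : Type*) [NormedAddCommGroup V] [InnerProductSpace ℂ V] [FiniteDimensional ℂ V]
    (τ : K →* (V ≃ₗᵢ[ℂ] V))
    (hcont : ∀ x : V, Continuous fun k : K => τ k x)
    (hinv : ∀ v : V, (∀ k : K, τ k v = v) → v = 0)
    (x : V) (y : Fin n → V) (hy : ∀ i : Fin n, ∀ k ∈ K' i, τ k (y i) = y i) :
    ‖x‖ ≤ 2 * n * N *
      Finset.univ.sup' (Finset.univ_nonempty_iff.mpr (Fin.pos_iff_nonempty.mp hn))
        (fun i : Fin n => ‖x - y i‖) := by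
  classical
  borelize K
  set M : ℝ := Finset.univ.sup' (Finset.univ_nonempty_iff.mpr (Fin.pos_iff_nonempty.mp hn))
      (fun i : Fin n => ‖x - y i‖) with hMdef
  have hMi : ∀ i : Fin n, ‖x - y i‖ ≤ M := by
    intro i
    rw [hMdef]
    exact Finset.le_sup' (fun j : Fin n => ‖x - y j‖) (Finset.mem_univ i)
  have hM0 : 0 ≤ M := le_trans (norm_nonneg _) (hMi ⟨0, hn⟩)
  -- single element bound
  have single : ∀ i : Fin n, ∀ g ∈ K' i, ‖x - τ g x‖ ≤ 2 * M := by
    intro i g hg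
    have h2 : ‖y i - τ g x‖ = ‖x - y i‖ := by
      conv_lhs => rw [← hy i g hg, ← LinearIsometryEquiv.map_sub]
      rw [LinearIsometryEquiv.norm_map, norm_sub_rev]
    calc ‖x - τ g x‖ = ‖(x - y i) + (y i - τ g x)‖ := by abel_nf
      _ ≤ ‖x - y i‖ + ‖y i - τ g x‖ := norm_add_le _ _
      _ = ‖x - y i‖ + ‖x - y i‖ := by rw [h2]
      _ ≤ M + M := add_le_add (hMi i) (hMi i)
      _ = 2 * M := by ring
  -- list bound
  have listlem : ∀ (C : ℝ) (l : List K), (∀ g ∈ l, ‖x - τ g x‖ ≤ C) →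
      ‖x - τ l.prod x‖ ≤ l.length * C := by
    intro C l
    induction l with
    | nil => intro _; simp
    | cons g t ih =>
      intro h
      have hg := h g (List.mem_cons_self (a := g) (l := t))
      have ht := ih (fun a ha => h a (List.mem_cons_of_mem _ ha))
      have hmul : τ ((g :: t).prod) x = τ g (τ t.prod x) := by
        rw [List.prod_cons, map_mul]
        rfl
      have hsplit : x - τ ((g :: t).prod) x = (x - τ g x) + τ g (x - τ t.prod x) := by
        rw [hmul, LinearIsometryEquiv.map_sub]
        abel
      rw [hsplit]
      calc ‖(x - τ g x) + τ g (x - τ t.prod x)‖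
          ≤ ‖x - τ g x‖ + ‖τ g (x - τ t.prod x)‖ := norm_add_le _ _
        _ = ‖x - τ g x‖ + ‖x - τ t.prod x‖ := by rw [LinearIsometryEquiv.norm_map]
        _ ≤ C + t.length * C := add_le_add hg ht
        _ = (g :: t).length * C := by
            simp only [List.length_cons]
            push_cast
            ring
  -- pointwise bound on the whole group
  have key : ∀ k : K, ‖x - τ k x‖ ≤ 2 * n * N * M := by
    intro k
    obtain ⟨f, hf, rfl⟩ := hgen k
    have block : ∀ g ∈ (List.ofFn fun b : Fin N =>
        (List.ofFn fun i : Fin n => f b i).prod), ‖x - τ g x‖ ≤ n * (2 * M) := by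
      intro g hg
      rw [List.mem_ofFn] at hg
      obtain ⟨b, rfl⟩ := hg
      have := listlem (2 * M) (List.ofFn fun i : Fin n => f b i) ?_
      · simpa using this
      · intro g hg
        rw [List.mem_ofFn] at hg
        obtain ⟨i, rfl⟩ := hg
        exact single i _ (hf b i)
    have := listlem (n * (2 * M)) _ block
    simp only [List.length_ofFn] at this
    calc ‖x - τ _ x‖ ≤ N * (n * (2 * M)) := this
      _ = 2 * n * N * M := by ring
  -- averaging over Haar measure
  let μ : Measure K := Measure.haar
  have hint : Integrable (fun k => τ k x) μ := by
    have := ((hcont x).continuousOn).integrableOn_compact' (μ := μ)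
      isCompact_univ MeasurableSet.univ
    rwa [integrableOn_univ] at this
  set z : V := ∫ k, τ k x ∂μ with hz
  have hzinv : ∀ g : K, τ g z = z := by
    intro g
    have L := ((τ g).toLinearIsometry.toContinuousLinearMap).integral_comp_comm hint
    have : τ g z = ∫ k, τ g (τ k x) ∂μ := by
      rw [hz]
      exact L.symm
    rw [this]
    have : (fun k => τ g (τ k x)) = fun k => τ (g * k) x := by
      funext k
      rw [map_mul]
      rfl
    rw [this]
    exact integral_mul_left_eq_self (fun k => τ k x) g
  have hz0 : z = 0 := hinv z hzinv
  have hconst : ∫ _ : K, x ∂μ = (μ Set.univ).toReal • x := integral_const x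
  have hsub : ∫ k, (x - τ k x) ∂μ = (μ Set.univ).toReal • x - z := by
    rw [integral_sub (integrable_const x) hint, hconst, hz]
  have hbound : ‖∫ k, (x - τ k x) ∂μ‖ ≤ (2 * n * N * M) * (μ Set.univ).toReal :=
    norm_integral_le_of_norm_le_const (Filter.Eventually.of_forall key)
  rw [hsub, hz0, sub_zero, norm_smul, Real.norm_eq_abs] at hbound
  have hcpos : 0 < (μ Set.univ).toReal := by
    refine ENNReal.toReal_pos ?_ (measure_ne_top μ _)
    exact (isOpen_univ.measure_pos μ Set.univ_nonempty).ne'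
  rw [abs_of_pos hcpos] at hbound
  have hbound' : ‖x‖ * (μ Set.univ).toReal ≤ 2 * n * N * M * (μ Set.univ).toReal := by
    rw [mul_comm ‖x‖]
    exact hbound
  exact le_of_mul_le_mul_right hbound' hcpos
end

section
/- Let 𝒪 be the ring of integers of a non-archimedean local field F. Let K₁ be the subgroup of Sp₄(𝒪) consisting of block matrices diag(A, Q·ᵀA⁻¹·Q) with A ∈ GL₂(𝒪) and Q the 2×2 antidiagonal permutation matrix, and K₂ the subgroup of matrices diag(1, B, 1) with B ∈ SL₂(𝒪) in the middle 2×2 block. Then Sp₄(𝒪) = (K₁K₂)^30, i.e., every element of Sp₄(𝒪) is a product of 30 factors each of the form k₁k₂ with k₁ ∈ K₁, k₂ ∈ K₂. -/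
/-- The antidiagonal symplectic form defining `Sp₄`. -/
def Jmat (R : Type*) [CommRing R] : Matrix (Fin 4) (Fin 4) R :=
  !![0,0,0,1; 0,0,1,0; 0,-1,0,0; -1,0,0,0]

/-- The 2×2 antidiagonal permutation matrix `Q`. -/
def Qmat (R : Type*) [CommRing R] : Matrix (Fin 2) (Fin 2) R :=
  !![0,1; 1,0]

/-- Membership in the subgroup `K₁ = {diag(A, QᵀA⁻¹Q) : A ∈ GL₂(𝒪)}` of `Sp₄(𝒪)`. -/
def memK1 {R : Type*} [CommRing R] (g : Matrix (Fin 4) (Fin 4) R) : Prop :=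
  ∃ A : Matrix (Fin 2) (Fin 2) R, IsUnit A.det ∧
    ∀ C : Matrix (Fin 2) (Fin 2) R, C = Qmat R * A⁻¹.transpose * Qmat R →
    g = !![A 0 0, A 0 1, 0, 0;
           A 1 0, A 1 1, 0, 0;
           0, 0, C 0 0, C 0 1;
           0, 0, C 1 0, C 1 1]

/-- Membership in the subgroup `K₂ = {diag(1, B, 1) : B ∈ SL₂(𝒪)}` of `Sp₄(𝒪)`. -/
def memK2 {R : Type*} [CommRing R] (g : Matrix (Fin 4) (Fin 4) R) : Prop :=
  ∃ B : Matrix (Fin 2) (Fin 2) R, B.det = 1 ∧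
    g = !![1, 0, 0, 0;
           0, B 0 0, B 0 1, 0;
           0, B 1 0, B 1 1, 0;
           0, 0, 0, 1]

open Matrix

namespace SpAux
variable {R : Type*} [CommRing R]

def blk (A C : Matrix (Fin 2) (Fin 2) R) : Matrix (Fin 4) (Fin 4) R :=
  !![A 0 0, A 0 1, 0, 0;
     A 1 0, A 1 1, 0, 0;
     0, 0, C 0 0, C 0 1;
     0, 0, C 1 0, C 1 1]

noncomputable def m1 (A : Matrix (Fin 2) (Fin 2) R) : Matrix (Fin 4) (Fin 4) R :=
  blk A (Qmat R * A⁻¹.transpose * Qmat R)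

def m2 (B : Matrix (Fin 2) (Fin 2) R) : Matrix (Fin 4) (Fin 4) R :=
  !![1, 0, 0, 0;
     0, B 0 0, B 0 1, 0;
     0, B 1 0, B 1 1, 0;
     0, 0, 0, 1]

lemma memK1_m1 {A : Matrix (Fin 2) (Fin 2) R} (h : IsUnit A.det) : memK1 (m1 A) :=
  ⟨A, h, fun C hC => by rw [m1, blk, hC]⟩

lemma memK2_m2 {B : Matrix (Fin 2) (Fin 2) R} (h : B.det = 1) : memK2 (m2 B) :=
  ⟨B, h, rfl⟩

lemma one_fin_four : (1 : Matrix (Fin 4) (Fin 4) R) = !![1,0,0,0;0,1,0,0;0,0,1,0;0,0,0,1] := by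
  ext i j; fin_cases i <;> fin_cases j <;>
    simp [Matrix.vecHead, Matrix.vecTail, Matrix.one_apply]

lemma one_fin_two' : (1 : Matrix (Fin 2) (Fin 2) R) = !![1,0;0,1] := by
  ext i j; fin_cases i <;> fin_cases j <;>
    simp [Matrix.vecHead, Matrix.vecTail, Matrix.one_apply]

lemma blk_mul (A C A' C' : Matrix (Fin 2) (Fin 2) R) :
    blk A C * blk A' C' = blk (A * A') (C * C') := by
  ext i j; fin_cases i <;> fin_cases j <;>
    simp [blk, Matrix.mul_apply, Fin.sum_univ_four, Fin.sum_univ_two,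
      Matrix.vecHead, Matrix.vecTail]

lemma QQ : Qmat R * Qmat R = 1 := by
  rw [one_fin_two']
  ext i j; fin_cases i <;> fin_cases j <;>
    simp [Qmat, Matrix.mul_apply, Fin.sum_univ_two, Matrix.vecHead, Matrix.vecTail]

lemma QQX (X : Matrix (Fin 2) (Fin 2) R) : Qmat R * (Qmat R * X) = X := by
  rw [← mul_assoc, QQ, one_mul]

lemma m1_mul (A A' : Matrix (Fin 2) (Fin 2) R) :
    m1 A * m1 A' = m1 (A * A') := by
  rw [m1, m1, m1, blk_mul]
  congr 1
  rw [Matrix.mul_inv_rev, Matrix.transpose_mul]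
  simp only [mul_assoc, QQX]

lemma m2_mul (B B' : Matrix (Fin 2) (Fin 2) R) :
    m2 B * m2 B' = m2 (B * B') := by
  ext i j; fin_cases i <;> fin_cases j <;>
    simp [m2, Matrix.mul_apply, Fin.sum_univ_four, Fin.sum_univ_two,
      Matrix.vecHead, Matrix.vecTail]

lemma m1_one : m1 (1 : Matrix (Fin 2) (Fin 2) R) = 1 := by
  rw [m1, inv_one, transpose_one, mul_one, QQ, one_fin_four, blk, one_fin_two']
  norm_num

lemma m2_one : m2 (1 : Matrix (Fin 2) (Fin 2) R) = 1 := by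
  rw [one_fin_four, m2, one_fin_two']; norm_num

def Sp (g : Matrix (Fin 4) (Fin 4) R) : Prop := g.transpose * Jmat R * g = Jmat R

lemma Sp.mul {w g : Matrix (Fin 4) (Fin 4) R} (hw : Sp w) (hg : Sp g) : Sp (w * g) := by
  unfold Sp at *
  rw [Matrix.transpose_mul]
  have : g.transpose * w.transpose * Jmat R * (w * g)
      = g.transpose * (w.transpose * Jmat R * w) * g := by
    simp only [mul_assoc]
  rw [this, hw, hg]

lemma sp_blk' (a b c d e f p q : R)
    (h00 : c * e + a * p = 0) (h01 : c * f + a * q = 1)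
    (h10 : d * e + b * p = 1) (h11 : d * f + b * q = 0) :
    Sp !![a, b, 0, 0; c, d, 0, 0; 0, 0, e, f; 0, 0, p, q] := by
  unfold Sp Jmat
  ext i j; fin_cases i <;> fin_cases j <;>
    simp [Matrix.mul_apply, Fin.sum_univ_four, Matrix.vecHead, Matrix.vecTail,
      Matrix.transpose_apply] <;>
    first
      | ring1
      | linear_combination h00 | linear_combination h01
      | linear_combination h10 | linear_combination h11
      | linear_combination -h00 | linear_combination -h01
      | linear_combination -h10 | linear_combination -h11

lemma sp_blk {A C : Matrix (Fin 2) (Fin 2) R} (h : A.transpose * Qmat R * C = Qmat R) :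
    Sp (blk A C) := by
  have h00 := congrFun (congrFun h 0) 0
  have h01 := congrFun (congrFun h 0) 1
  have h10 := congrFun (congrFun h 1) 0
  have h11 := congrFun (congrFun h 1) 1
  simp [Qmat, Matrix.mul_apply, Fin.sum_univ_two, Matrix.vecHead, Matrix.vecTail,
    Matrix.transpose_apply] at h00 h01 h10 h11
  exact sp_blk' (A 0 0) (A 0 1) (A 1 0) (A 1 1) (C 0 0) (C 0 1) (C 1 0) (C 1 1)
    (by linear_combination h00) (by linear_combination h01)
    (by linear_combination h10) (by linear_combination h11)

lemma sp_m1 {A : Matrix (Fin 2) (Fin 2) R} (h : IsUnit A.det) : Sp (m1 A) := by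
  apply sp_blk
  have hA : A.transpose * A⁻¹.transpose = 1 := by
    rw [← Matrix.transpose_mul, Matrix.nonsing_inv_mul _ h, Matrix.transpose_one]
  calc A.transpose * Qmat R * (Qmat R * A⁻¹.transpose * Qmat R)
      = A.transpose * ((Qmat R * (Qmat R * (A⁻¹.transpose * Qmat R)))) := by
        simp only [mul_assoc]
    _ = A.transpose * (A⁻¹.transpose * Qmat R) := by rw [QQX]
    _ = A.transpose * A⁻¹.transpose * Qmat R := by rw [mul_assoc]
    _ = Qmat R := by rw [hA, one_mul]

lemma sp_m2' (a b c d : R) (hd : a * d - b * c = 1) :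
    Sp !![1,0,0,0; 0,a,b,0; 0,c,d,0; 0,0,0,1] := by
  unfold Sp Jmat
  ext i j; fin_cases i <;> fin_cases j <;>
    simp [Matrix.mul_apply, Fin.sum_univ_four, Matrix.vecHead, Matrix.vecTail,
      Matrix.transpose_apply] <;>
    first | ring1 | linear_combination hd | linear_combination -hd

lemma sp_m2 {B : Matrix (Fin 2) (Fin 2) R} (h : B.det = 1) : Sp (m2 B) := by
  have hd : B 0 0 * B 1 1 - B 0 1 * B 1 0 = 1 := by rw [← Matrix.det_fin_two]; exact h
  exact sp_m2' _ _ _ _ hd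


lemma inv2 {A B : Matrix (Fin 2) (Fin 2) R} (h : A * B = 1) : A⁻¹ = B :=
  Matrix.inv_eq_right_inv h

lemma m1_explicit {A B C : Matrix (Fin 2) (Fin 2) R} (hAB : A * B = 1)
    (hC : Qmat R * B.transpose * Qmat R = C) : m1 A = blk A C := by
  rw [m1, inv2 hAB, hC]

lemma detQ : IsUnit ((Qmat R).det) := by
  rw [Qmat, Matrix.det_fin_two_of]
  simpa using (isUnit_one (M := R)).neg

lemma m1Q : m1 (Qmat R) = !![0,1,0,0; 1,0,0,0; 0,0,0,1; 0,0,1,0] := by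
  rw [m1_explicit (B := Qmat R) QQ rfl]
  ext i j; fin_cases i <;> fin_cases j <;>
    simp [blk, Qmat, Matrix.mul_apply, Fin.sum_univ_two,
      Matrix.vecHead, Matrix.vecTail, Matrix.transpose_apply, Matrix.vecMul, dotProduct]

def lowB (t : R) : Matrix (Fin 2) (Fin 2) R := !![1,0;t,1]
def upB (t : R) : Matrix (Fin 2) (Fin 2) R := !![1,t;0,1]

lemma det_lowB (t : R) : (lowB t).det = 1 := by simp [lowB, Matrix.det_fin_two_of]
lemma det_upB (t : R) : (upB t).det = 1 := by simp [upB, Matrix.det_fin_two_of]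

/-- the matrix `A₀ = !![-1,1;1,0]` -/
lemma m1A0 : m1 !![(-1:R),1;1,0] = !![-1,1,0,0; 1,0,0,0; 0,0,1,1; 0,0,1,0] := by
  rw [m1_explicit (B := !![0,1;1,1]) (by
    ext i j; fin_cases i <;> fin_cases j <;>
      simp [Matrix.mul_apply, Fin.sum_univ_two, Matrix.vecHead, Matrix.vecTail,
        Matrix.one_apply]) (C := !![1,1;1,0]) (by
    ext i j; fin_cases i <;> fin_cases j <;>
      simp [Qmat, Matrix.mul_apply, Fin.sum_univ_two, Matrix.vecHead, Matrix.vecTail,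
        Matrix.transpose_apply, Matrix.vecMul, dotProduct])]
  ext i j; fin_cases i <;> fin_cases j <;>
    simp [blk, Matrix.vecHead, Matrix.vecTail]

lemma detA0 : IsUnit ((!![(-1:R),1;1,0]).det) := by
  rw [Matrix.det_fin_two_of]; simpa using (isUnit_one (M := R)).neg

/-- the matrix `A₁ = !![0,1;1,1]` (inverse of A₀ up to ...) -/
lemma m1A1 : m1 !![(0:R),1;1,1] = !![0,1,0,0; 1,1,0,0; 0,0,0,1; 0,0,1,-1] := by
  rw [m1_explicit (B := !![-1,1;1,0]) (by
    ext i j; fin_cases i <;> fin_cases j <;>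
      simp [Matrix.mul_apply, Fin.sum_univ_two, Matrix.vecHead, Matrix.vecTail,
        Matrix.one_apply]) (C := !![0,1;1,-1]) (by
    ext i j; fin_cases i <;> fin_cases j <;>
      simp [Qmat, Matrix.mul_apply, Fin.sum_univ_two, Matrix.vecHead, Matrix.vecTail,
        Matrix.transpose_apply, Matrix.vecMul, dotProduct])]
  ext i j; fin_cases i <;> fin_cases j <;>
    simp [blk, Matrix.vecHead, Matrix.vecTail]

lemma detA1 : IsUnit ((!![(0:R),1;1,1]).det) := by
  rw [Matrix.det_fin_two_of]; simpa using (isUnit_one (M := R)).neg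

/-- upper-triangular `m1`: `m1 !![1,x;0,1]`. -/
lemma m1up (x : R) : m1 !![(1:R),x;0,1] = !![1,x,0,0; 0,1,0,0; 0,0,1,-x; 0,0,0,1] := by
  rw [m1_explicit (B := !![1,-x;0,1]) (by
    ext i j; fin_cases i <;> fin_cases j <;>
      simp [Matrix.mul_apply, Fin.sum_univ_two, Matrix.vecHead, Matrix.vecTail,
        Matrix.one_apply]) (C := !![1,-x;0,1]) (by
    ext i j; fin_cases i <;> fin_cases j <;>
      simp [Qmat, Matrix.mul_apply, Fin.sum_univ_two, Matrix.vecHead, Matrix.vecTail,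
        Matrix.transpose_apply, Matrix.vecMul, dotProduct])]
  ext i j; fin_cases i <;> fin_cases j <;>
    simp [blk, Matrix.vecHead, Matrix.vecTail]

lemma det_up (x : R) : IsUnit ((!![(1:R),x;0,1]).det) := by
  rw [Matrix.det_fin_two_of]; simpa using isUnit_one (M := R)

def LE10 (s : R) : Matrix (Fin 4) (Fin 4) R := !![1,0,0,0; 0,1,0,0; 0,0,1,0; s,0,0,1]
def Lones (t : R) : Matrix (Fin 4) (Fin 4) R := !![1,0,0,0; 0,1,0,0; t,t,1,0; t,t,0,1]
def Uones (t : R) : Matrix (Fin 4) (Fin 4) R := !![1,0,t,t; 0,1,t,t; 0,0,1,0; 0,0,0,1]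
def UE01 (s : R) : Matrix (Fin 4) (Fin 4) R := !![1,0,0,s; 0,1,0,0; 0,0,1,0; 0,0,0,1]

lemma LE10_word (s : R) : LE10 s = m1 (Qmat R) * m2 (lowB s) * m1 (Qmat R) := by
  rw [m1Q]
  ext i j; fin_cases i <;> fin_cases j <;>
    simp [LE10, m2, lowB, Matrix.mul_apply, Fin.sum_univ_four,
      Matrix.vecHead, Matrix.vecTail]

lemma Lones_word (t : R) : Lones t = m1 !![(-1:R),1;1,0] * m2 (lowB t) * m1 !![(0:R),1;1,1] := by
  rw [m1A0, m1A1]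
  ext i j; fin_cases i <;> fin_cases j <;>
    simp [Lones, m2, lowB, Matrix.mul_apply, Fin.sum_univ_four,
      Matrix.vecHead, Matrix.vecTail]

lemma Uones_word (t : R) : Uones t = m1 !![(0:R),1;1,1] * m2 (upB t) * m1 !![(-1:R),1;1,0] := by
  rw [m1A0, m1A1]
  ext i j; fin_cases i <;> fin_cases j <;>
    simp [Uones, m2, upB, Matrix.mul_apply, Fin.sum_univ_four,
      Matrix.vecHead, Matrix.vecTail]

lemma UE01_word (s : R) : UE01 s = m1 (Qmat R) * m2 (upB s) * m1 (Qmat R) := by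
  rw [m1Q]
  ext i j; fin_cases i <;> fin_cases j <;>
    simp [UE01, m2, upB, Matrix.mul_apply, Fin.sum_univ_four,
      Matrix.vecHead, Matrix.vecTail]

lemma Lones_inv (t : R) : Lones t * Lones (-t) = 1 := by
  rw [one_fin_four]
  ext i j; fin_cases i <;> fin_cases j <;>
    simp [Lones, Matrix.mul_apply, Fin.sum_univ_four, Matrix.vecHead, Matrix.vecTail]

lemma LE10_inv (s : R) : LE10 s * LE10 (-s) = 1 := by
  rw [one_fin_four]
  ext i j; fin_cases i <;> fin_cases j <;>
    simp [LE10, Matrix.mul_apply, Fin.sum_univ_four, Matrix.vecHead, Matrix.vecTail]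

lemma sp_LE10 (s : R) : Sp (LE10 s) := by
  rw [LE10_word]
  exact Sp.mul (Sp.mul (sp_m1 detQ) (sp_m2 (det_lowB s))) (sp_m1 detQ)

lemma sp_Lones (t : R) : Sp (Lones t) := by
  rw [Lones_word]
  exact Sp.mul (Sp.mul (sp_m1 detA0) (sp_m2 (det_lowB t))) (sp_m1 detA1)


def K (w : Matrix (Fin 4) (Fin 4) R) : Prop := memK1 w ∨ memK2 w

def Word (n : ℕ) (g : Matrix (Fin 4) (Fin 4) R) : Prop :=
  ∃ l : List (Matrix (Fin 4) (Fin 4) R), l.length = n ∧ (∀ x ∈ l, K x) ∧ l.prod = g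

lemma memK1_one : memK1 (1 : Matrix (Fin 4) (Fin 4) R) := by
  have := memK1_m1 (A := (1 : Matrix (Fin 2) (Fin 2) R)) (by simp)
  rwa [m1_one] at this

lemma memK2_one : memK2 (1 : Matrix (Fin 4) (Fin 4) R) := by
  have := memK2_m2 (B := (1 : Matrix (Fin 2) (Fin 2) R)) (by simp)
  rwa [m2_one] at this

lemma word_K {w : Matrix (Fin 4) (Fin 4) R} (h : K w) : Word 1 w :=
  ⟨[w], rfl, by simpa using h, by simp⟩

lemma word_m1 {A : Matrix (Fin 2) (Fin 2) R} (h : IsUnit A.det) : Word 1 (m1 A) :=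
  word_K (Or.inl (memK1_m1 h))

lemma word_m2 {B : Matrix (Fin 2) (Fin 2) R} (h : B.det = 1) : Word 1 (m2 B) :=
  word_K (Or.inr (memK2_m2 h))

lemma word_mul {m n : ℕ} {g h : Matrix (Fin 4) (Fin 4) R}
    (hg : Word m g) (hh : Word n h) : Word (m + n) (g * h) := by
  obtain ⟨l₁, hl₁, hk₁, hp₁⟩ := hg
  obtain ⟨l₂, hl₂, hk₂, hp₂⟩ := hh
  exact ⟨l₁ ++ l₂, by simp [hl₁, hl₂], by
    intro x hx; rcases List.mem_append.mp hx with h | h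
    exacts [hk₁ x h, hk₂ x h], by rw [List.prod_append, hp₁, hp₂]⟩

lemma word_pad {n m : ℕ} {g : Matrix (Fin 4) (Fin 4) R} (hg : Word n g) (h : n ≤ m) :
    Word m g := by
  obtain ⟨l, hl, hk, hp⟩ := hg
  refine ⟨List.replicate (m - n) 1 ++ l, by simp [hl]; omega, ?_, ?_⟩
  · intro x hx
    rcases List.mem_append.mp hx with h | h
    · rw [List.eq_of_mem_replicate h]; exact Or.inl memK1_one
    · exact hk x h
  · rw [List.prod_append, List.prod_replicate, one_pow, one_mul, hp]

lemma word_LE10 (s : R) : Word 3 (LE10 s) := by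
  rw [LE10_word]
  exact word_mul (word_mul (word_m1 detQ) (word_m2 (det_lowB s))) (word_m1 detQ)

lemma word_Lones (t : R) : Word 3 (Lones t) := by
  rw [Lones_word]
  exact word_mul (word_mul (word_m1 detA0) (word_m2 (det_lowB t))) (word_m1 detA1)

lemma word_Uones (t : R) : Word 3 (Uones t) := by
  rw [Uones_word]
  exact word_mul (word_mul (word_m1 detA1) (word_m2 (det_upB t))) (word_m1 detA0)

lemma word_UE01 (s : R) : Word 3 (UE01 s) := by
  rw [UE01_word]
  exact word_mul (word_mul (word_m1 detQ) (word_m2 (det_upB s))) (word_m1 detQ)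

lemma word_final {g : Matrix (Fin 4) (Fin 4) R} (hg : Word 30 g) :
    ∃ k₁ k₂ : Fin 30 → Matrix (Fin 4) (Fin 4) R,
      (∀ i, memK1 (k₁ i)) ∧ (∀ i, memK2 (k₂ i)) ∧
      g = (List.ofFn fun i : Fin 30 => k₁ i * k₂ i).prod := by
  classical
  obtain ⟨l, hl, hk, hp⟩ := hg
  set F : Fin 30 → Matrix (Fin 4) (Fin 4) R := fun i => l.get (Fin.cast hl.symm i) with hF
  refine ⟨fun i => if memK1 (F i) then F i else 1,
          fun i => if memK1 (F i) then 1 else F i, ?_, ?_, ?_⟩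
  · intro i; by_cases h : memK1 (F i) <;> simp [h, memK1_one]
  · intro i; by_cases h : memK1 (F i) <;> simp [h]
    · exact memK2_one
    · rcases hk (F i) (by simp [hF, List.get_mem]) with h1 | h2
      · exact absurd h1 h
      · exact h2
  · have hofn : List.ofFn F = l := by
      apply List.ext_get (by simp [hl])
      intro i h1 h2
      rw [List.get_ofFn]
      rfl
    rw [← hp]
    have : ∀ i : Fin 30,
        (if memK1 (F i) then F i else 1) * (if memK1 (F i) then 1 else F i) = F i := by
      intro i; by_cases h : memK1 (F i) <;> simp [h]
    simp only [this]
    rw [hofn]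


lemma UUU (t s r : R) : Uones t * (UE01 s * m2 (upB r))
    = !![1,0,t,s+t; 0,1,r+t,t; 0,0,1,0; 0,0,0,1] := by
  ext i j; fin_cases i <;> fin_cases j <;>
    simp [Uones, UE01, m2, upB, Matrix.mul_apply, Fin.sum_univ_four,
      Matrix.vecHead, Matrix.vecTail] <;> try ring1

set_option maxHeartbeats 1000000 in
lemma stepE {g : Matrix (Fin 4) (Fin 4) R} (hsp : Sp g)
    (e00 : g 0 0 = 1) (e10 : g 1 0 = 0) (e20 : g 2 0 = 0) (e30 : g 3 0 = 0)
    (e11 : g 1 1 = 1) (e21 : g 2 1 = 0) (e31 : g 3 1 = 0)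
    (e12 : g 1 2 = 0) (e22 : g 2 2 = 1) (e32 : g 3 2 = 0) (e33 : g 3 3 = 1) :
    Word 8 g := by
  have hum : m1 !![(1:R), -(g 0 1); 0, 1]
      = !![1, -(g 0 1), 0, 0; 0, 1, 0, 0; 0, 0, 1, g 0 1; 0, 0, 0, 1] := by
    rw [m1up, neg_neg]
  have hwexp : m1 !![(1:R), -(g 0 1); 0, 1] * g
      = !![1, 0, g 0 2, g 0 3 - g 0 1 * g 1 3;
           0, 1, 0, g 1 3;
           0, 0, 1, g 2 3 + g 0 1;
           0, 0, 0, 1] := by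
    rw [hum]
    ext i j; fin_cases i <;> fin_cases j <;>
      simp [Matrix.mul_apply, Fin.sum_univ_four, Matrix.vecHead, Matrix.vecTail] <;>
      (try simp only [e00, e10, e20, e30, e11, e21, e31, e12, e22, e32, e33]) <;>
      (try ring1)
  have hspw : Sp (!![1, 0, g 0 2, g 0 3 - g 0 1 * g 1 3;
           (0:R), 1, 0, g 1 3;
           0, 0, 1, g 2 3 + g 0 1;
           0, 0, 0, 1]) := hwexp ▸ Sp.mul (sp_m1 (det_up _)) hsp
  have hE : g 2 3 + g 0 1 = 0 := by
    have h := congrFun (congrFun hspw 1) 3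
    simp [Jmat, Matrix.mul_apply, Matrix.transpose_apply, Fin.sum_univ_four,
      Matrix.vecHead, Matrix.vecTail] at h
    first | linear_combination h | linear_combination -h
  have hD : g 1 3 = g 0 2 := by
    have h := congrFun (congrFun hspw 2) 3
    simp [Jmat, Matrix.mul_apply, Matrix.transpose_apply, Fin.sum_univ_four,
      Matrix.vecHead, Matrix.vecTail] at h
    first | linear_combination h | linear_combination -h
  have hdecomp : (!![1, 0, g 0 2, g 0 3 - g 0 1 * g 1 3;
           (0:R), 1, 0, g 1 3;
           0, 0, 1, g 2 3 + g 0 1;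
           0, 0, 0, 1])
      = Uones (g 0 2) * (UE01 (g 0 3 - g 0 1 * g 1 3 - g 0 2) * m2 (upB (-(g 0 2)))) := by
    rw [UUU]
    ext i j; fin_cases i <;> fin_cases j <;>
      simp [Matrix.vecHead, Matrix.vecTail] <;>
      first
        | ring1
        | linear_combination hD
        | linear_combination -hD
        | linear_combination hE
        | linear_combination -hE
        | linear_combination hE + hD
        | linear_combination hE - hD
        | linear_combination -hE + hD
        | linear_combination -hE - hD
  have hword7 : Word 7 (!![1, 0, g 0 2, g 0 3 - g 0 1 * g 1 3;
           (0:R), 1, 0, g 1 3;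
           0, 0, 1, g 2 3 + g 0 1;
           0, 0, 0, 1]) := by
    rw [hdecomp]
    exact word_mul (word_Uones _) (word_mul (word_UE01 _) (word_m2 (det_upB _)))
  have hvu : m1 !![(1:R), g 0 1; 0, 1] * m1 !![(1:R), -(g 0 1); 0, 1] = 1 := by
    rw [m1_mul]
    have : !![(1:R), g 0 1; 0, 1] * !![(1:R), -(g 0 1); 0, 1] = 1 := by
      ext i j; fin_cases i <;> fin_cases j <;>
        simp [Matrix.mul_apply, Fin.sum_univ_two, Matrix.vecHead, Matrix.vecTail,
          Matrix.one_apply]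
    rw [this, m1_one]
  have hg' : g = m1 !![(1:R), g 0 1; 0, 1] * (!![1, 0, g 0 2, g 0 3 - g 0 1 * g 1 3;
           (0:R), 1, 0, g 1 3;
           0, 0, 1, g 2 3 + g 0 1;
           0, 0, 0, 1]) := by
    rw [← hwexp, ← mul_assoc, hvu, one_mul]
  rw [hg']
  exact word_mul (word_m1 (det_up _)) hword7

set_option maxHeartbeats 1000000 in
lemma stepD {g : Matrix (Fin 4) (Fin 4) R} (hsp : Sp g)
    (e00 : g 0 0 = 1) (e10 : g 1 0 = 0) (e20 : g 2 0 = 0) (e30 : g 3 0 = 0) :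
    Word 9 g := by
  have h31 : g 3 1 = 0 := by
    have h := congrFun (congrFun hsp 1) 0
    simp [Jmat, Matrix.mul_apply, Matrix.transpose_apply, Fin.sum_univ_four,
      Matrix.vecHead, Matrix.vecTail] at h
    simp only [e00, e10, e20, e30] at h
    first | linear_combination h | linear_combination -h
  have h32 : g 3 2 = 0 := by
    have h := congrFun (congrFun hsp 2) 0
    simp [Jmat, Matrix.mul_apply, Matrix.transpose_apply, Fin.sum_univ_four,
      Matrix.vecHead, Matrix.vecTail] at h
    simp only [e00, e10, e20, e30] at h
    first | linear_combination h | linear_combination -h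
  have h33 : g 3 3 = 1 := by
    have h := congrFun (congrFun hsp 3) 0
    simp [Jmat, Matrix.mul_apply, Matrix.transpose_apply, Fin.sum_univ_four,
      Matrix.vecHead, Matrix.vecTail] at h
    simp only [e00, e10, e20, e30] at h
    first | linear_combination h | linear_combination -h
  have hdet : g 1 1 * g 2 2 - g 1 2 * g 2 1 = 1 := by
    have h := congrFun (congrFun hsp 1) 2
    simp [Jmat, Matrix.mul_apply, Matrix.transpose_apply, Fin.sum_univ_four,
      Matrix.vecHead, Matrix.vecTail] at h
    simp only [e00, e10, e20, e30, h31, h32, h33] at h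
    first | linear_combination h | linear_combination -h
  have hBX : !![g 1 1, g 1 2; g 2 1, g 2 2] * !![g 2 2, -(g 1 2); -(g 2 1), g 1 1] = 1 := by
    ext i j; fin_cases i <;> fin_cases j <;>
      simp [Matrix.mul_apply, Fin.sum_univ_two, Matrix.vecHead, Matrix.vecTail,
        Matrix.one_apply] <;>
      first | ring1 | linear_combination hdet | linear_combination -hdet
  have detX : (!![g 2 2, -(g 1 2); -(g 2 1), g 1 1]).det = 1 := by
    rw [Matrix.det_fin_two_of]
    linear_combination hdet
  have detB : (!![g 1 1, g 1 2; g 2 1, g 2 2]).det = 1 := by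
    rw [Matrix.det_fin_two_of]
    linear_combination hdet
  have hwexp : m2 !![g 2 2, -(g 1 2); -(g 2 1), g 1 1] * g
      = !![1, g 0 1, g 0 2, g 0 3;
           0, 1, 0, g 2 2 * g 1 3 - g 1 2 * g 2 3;
           0, 0, 1, g 1 1 * g 2 3 - g 2 1 * g 1 3;
           0, 0, 0, 1] := by
    ext i j; fin_cases i <;> fin_cases j <;>
      simp [m2, Matrix.mul_apply, Fin.sum_univ_four, Matrix.vecHead, Matrix.vecTail] <;>
      (try simp only [e00, e10, e20, e30, h31, h32, h33]) <;>
      first | ring1 | linear_combination hdet | linear_combination -hdet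
  have hspw := hwexp ▸ Sp.mul (sp_m2 detX) hsp
  have hword8 : Word 8 (!![1, g 0 1, g 0 2, g 0 3;
           (0:R), 1, 0, g 2 2 * g 1 3 - g 1 2 * g 2 3;
           0, 0, 1, g 1 1 * g 2 3 - g 2 1 * g 1 3;
           0, 0, 0, 1]) := by
    apply stepE hspw <;> simp [Matrix.vecHead, Matrix.vecTail]
  have hvu : m2 !![g 1 1, g 1 2; g 2 1, g 2 2] * m2 !![g 2 2, -(g 1 2); -(g 2 1), g 1 1] = 1 := by
    rw [m2_mul, hBX, m2_one]
  have hg' : g = m2 !![g 1 1, g 1 2; g 2 1, g 2 2] * (!![1, g 0 1, g 0 2, g 0 3;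
           (0:R), 1, 0, g 2 2 * g 1 3 - g 1 2 * g 2 3;
           0, 0, 1, g 1 1 * g 2 3 - g 2 1 * g 1 3;
           0, 0, 0, 1]) := by
    rw [← hwexp, ← mul_assoc, hvu, one_mul]
  rw [hg']
  exact word_mul (word_m2 detB) hword8

lemma LLeq (c d : R) : LE10 (c - d) * Lones (-c)
    = !![1,0,0,0; 0,1,0,0; -c,-c,1,0; -d,-c,0,1] := by
  ext i j; fin_cases i <;> fin_cases j <;>
    simp [LE10, Lones, Matrix.mul_apply, Fin.sum_univ_four,
      Matrix.vecHead, Matrix.vecTail] <;> try ring1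

lemma LLcancel (c d : R) :
    Lones c * (LE10 (d - c) * !![1,0,0,0; 0,1,0,0; -c,-c,1,0; -d,-c,0,1]) = 1 := by
  rw [one_fin_four]
  ext i j; fin_cases i <;> fin_cases j <;>
    simp [LE10, Lones, Matrix.mul_apply, Fin.sum_univ_four,
      Matrix.vecHead, Matrix.vecTail] <;> try ring1

set_option maxHeartbeats 1000000 in
lemma stepC {g : Matrix (Fin 4) (Fin 4) R} (hsp : Sp g)
    (e00 : g 0 0 = 1) (e10 : g 1 0 = 0) : Word 15 g := by
  have hwexp : (!![1,0,0,0; 0,1,0,0; -(g 2 0),-(g 2 0),1,0; -(g 3 0),-(g 2 0),0,1]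
        : Matrix (Fin 4) (Fin 4) R) * g
      = !![1, g 0 1, g 0 2, g 0 3;
           0, g 1 1, g 1 2, g 1 3;
           0, -(g 2 0) * g 0 1 - g 2 0 * g 1 1 + g 2 1,
              -(g 2 0) * g 0 2 - g 2 0 * g 1 2 + g 2 2,
              -(g 2 0) * g 0 3 - g 2 0 * g 1 3 + g 2 3;
           0, -(g 3 0) * g 0 1 - g 2 0 * g 1 1 + g 3 1,
              -(g 3 0) * g 0 2 - g 2 0 * g 1 2 + g 3 2,
              -(g 3 0) * g 0 3 - g 2 0 * g 1 3 + g 3 3] := by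
    ext i j; fin_cases i <;> fin_cases j <;>
      simp [Matrix.mul_apply, Fin.sum_univ_four, Matrix.vecHead, Matrix.vecTail] <;>
      (try simp only [e00, e10]) <;> try ring1
  have hspll : Sp (!![1,0,0,0; 0,1,0,0; -(g 2 0),-(g 2 0),1,0; -(g 3 0),-(g 2 0),0,1]
        : Matrix (Fin 4) (Fin 4) R) :=
    LLeq (g 2 0) (g 3 0) ▸ Sp.mul (sp_LE10 _) (sp_Lones _)
  have hspw := hwexp ▸ Sp.mul hspll hsp
  have hword9 : Word 9 (!![1, g 0 1, g 0 2, g 0 3;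
           (0:R), g 1 1, g 1 2, g 1 3;
           0, -(g 2 0) * g 0 1 - g 2 0 * g 1 1 + g 2 1,
              -(g 2 0) * g 0 2 - g 2 0 * g 1 2 + g 2 2,
              -(g 2 0) * g 0 3 - g 2 0 * g 1 3 + g 2 3;
           0, -(g 3 0) * g 0 1 - g 2 0 * g 1 1 + g 3 1,
              -(g 3 0) * g 0 2 - g 2 0 * g 1 2 + g 3 2,
              -(g 3 0) * g 0 3 - g 2 0 * g 1 3 + g 3 3]) := by
    apply stepD hspw <;> simp [Matrix.vecHead, Matrix.vecTail]
  have hg' : g = Lones (g 2 0) * (LE10 (g 3 0 - g 2 0) * (!![1, g 0 1, g 0 2, g 0 3;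
           (0:R), g 1 1, g 1 2, g 1 3;
           0, -(g 2 0) * g 0 1 - g 2 0 * g 1 1 + g 2 1,
              -(g 2 0) * g 0 2 - g 2 0 * g 1 2 + g 2 2,
              -(g 2 0) * g 0 3 - g 2 0 * g 1 3 + g 2 3;
           0, -(g 3 0) * g 0 1 - g 2 0 * g 1 1 + g 3 1,
              -(g 3 0) * g 0 2 - g 2 0 * g 1 2 + g 3 2,
              -(g 3 0) * g 0 3 - g 2 0 * g 1 3 + g 3 3])) := by
    rw [← hwexp, ← mul_assoc (LE10 _), ← mul_assoc (Lones _), LLcancel, one_mul]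
  rw [hg']
  exact word_mul (word_Lones _) (word_mul (word_LE10 _) hword9)

set_option maxHeartbeats 1000000 in
lemma stepB {g : Matrix (Fin 4) (Fin 4) R} (hsp : Sp g)
    (h : IsUnit (g 0 0) ∨ IsUnit (g 1 0)) : Word 16 g := by
  rcases h with h | h
  · obtain ⟨ua, hua⟩ := h
    have hr : ((ua⁻¹ : Rˣ) : R) * g 0 0 = 1 := by
      rw [← hua]; exact_mod_cast ua.inv_mul
    set r : R := ((ua⁻¹ : Rˣ) : R) with hrdef
    have hAV : !![r, 0; -(g 1 0 * r), 1] * !![g 0 0, 0; g 1 0, 1] = 1 := by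
      ext i j; fin_cases i <;> fin_cases j <;>
        simp [Matrix.mul_apply, Fin.sum_univ_two, Matrix.vecHead, Matrix.vecTail,
          Matrix.one_apply] <;>
        first
          | ring1
          | linear_combination hr
          | linear_combination -hr
          | linear_combination g 1 0 * hr
          | linear_combination -(g 1 0) * hr
    have hVA : !![g 0 0, 0; g 1 0, 1] * !![r, 0; -(g 1 0 * r), 1] = 1 := by
      ext i j; fin_cases i <;> fin_cases j <;>
        simp [Matrix.mul_apply, Fin.sum_univ_two, Matrix.vecHead, Matrix.vecTail,
          Matrix.one_apply] <;>
        first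
          | ring1
          | linear_combination hr
          | linear_combination -hr
          | linear_combination g 0 0 * hr
          | linear_combination -(g 0 0) * hr
    have hm1A : m1 !![r, 0; -(g 1 0 * r), 1]
        = !![r,0,0,0; -(g 1 0 * r),1,0,0; 0,0,1,0; 0,0,g 1 0, g 0 0] := by
      rw [m1_explicit hAV (C := !![1,0; g 1 0, g 0 0]) (by
        ext i j; fin_cases i <;> fin_cases j <;>
          simp [Qmat, Matrix.mul_apply, Fin.sum_univ_two, Matrix.vecHead, Matrix.vecTail,
            Matrix.transpose_apply, Matrix.vecMul, dotProduct])]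
      ext i j; fin_cases i <;> fin_cases j <;>
        simp [blk, Matrix.vecHead, Matrix.vecTail]
    have detA : IsUnit ((!![r, 0; -(g 1 0 * r), 1]).det) := by
      have hc : (!![r, 0; -(g 1 0 * r), 1]).det = r := by
        rw [Matrix.det_fin_two_of]; ring
      rw [hc]; exact (ua⁻¹ : Rˣ).isUnit
    have detV : IsUnit ((!![g 0 0, 0; g 1 0, 1]).det) := by
      rw [Matrix.det_fin_two_of]
      simpa [← hua] using ua.isUnit
    have hwexp : m1 !![r, 0; -(g 1 0 * r), 1] * g
        = !![1, r * g 0 1, r * g 0 2, r * g 0 3;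
             0, -(g 1 0 * r) * g 0 1 + g 1 1, -(g 1 0 * r) * g 0 2 + g 1 2,
                -(g 1 0 * r) * g 0 3 + g 1 3;
             g 2 0, g 2 1, g 2 2, g 2 3;
             g 1 0 * g 2 0 + g 0 0 * g 3 0, g 1 0 * g 2 1 + g 0 0 * g 3 1,
                g 1 0 * g 2 2 + g 0 0 * g 3 2, g 1 0 * g 2 3 + g 0 0 * g 3 3] := by
      rw [hm1A]
      ext i j; fin_cases i <;> fin_cases j <;>
        simp [Matrix.mul_apply, Fin.sum_univ_four, Matrix.vecHead, Matrix.vecTail] <;>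
        first
          | ring1
          | linear_combination hr
          | linear_combination -hr
          | linear_combination g 1 0 * hr
          | linear_combination -(g 1 0) * hr
    have hspw := hwexp ▸ Sp.mul (sp_m1 detA) hsp
    have hword15 := stepC hspw (by simp [Matrix.vecHead, Matrix.vecTail])
      (by simp [Matrix.vecHead, Matrix.vecTail])
    have hvu : m1 !![g 0 0, 0; g 1 0, 1] * m1 !![r, 0; -(g 1 0 * r), 1] = 1 := by
      rw [m1_mul, hVA, m1_one]
    have hg' : g = m1 !![g 0 0, 0; g 1 0, 1] * (!![1, r * g 0 1, r * g 0 2, r * g 0 3;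
             (0:R), -(g 1 0 * r) * g 0 1 + g 1 1, -(g 1 0 * r) * g 0 2 + g 1 2,
                -(g 1 0 * r) * g 0 3 + g 1 3;
             g 2 0, g 2 1, g 2 2, g 2 3;
             g 1 0 * g 2 0 + g 0 0 * g 3 0, g 1 0 * g 2 1 + g 0 0 * g 3 1,
                g 1 0 * g 2 2 + g 0 0 * g 3 2, g 1 0 * g 2 3 + g 0 0 * g 3 3]) := by
      rw [← hwexp, ← mul_assoc, hvu, one_mul]
    rw [hg']
    exact word_mul (word_m1 detV) hword15
  · obtain ⟨ub, hub⟩ := h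
    have hr : ((ub⁻¹ : Rˣ) : R) * g 1 0 = 1 := by
      rw [← hub]; exact_mod_cast ub.inv_mul
    set r : R := ((ub⁻¹ : Rˣ) : R) with hrdef
    have hAV : !![0, r; 1, -(g 0 0 * r)] * !![g 0 0, 1; g 1 0, 0] = 1 := by
      ext i j; fin_cases i <;> fin_cases j <;>
        simp [Matrix.mul_apply, Fin.sum_univ_two, Matrix.vecHead, Matrix.vecTail,
          Matrix.one_apply] <;>
        first
          | ring1
          | linear_combination hr
          | linear_combination -hr
          | linear_combination g 0 0 * hr
          | linear_combination -(g 0 0) * hr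
    have hVA : !![g 0 0, 1; g 1 0, 0] * !![0, r; 1, -(g 0 0 * r)] = 1 := by
      ext i j; fin_cases i <;> fin_cases j <;>
        simp [Matrix.mul_apply, Fin.sum_univ_two, Matrix.vecHead, Matrix.vecTail,
          Matrix.one_apply] <;>
        first
          | ring1
          | linear_combination hr
          | linear_combination -hr
          | linear_combination g 0 0 * hr
          | linear_combination -(g 0 0) * hr
    have hm1A : m1 !![0, r; 1, -(g 0 0 * r)]
        = !![0,r,0,0; 1,-(g 0 0 * r),0,0; 0,0,0,1; 0,0,g 1 0, g 0 0] := by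
      rw [m1_explicit hAV (C := !![0,1; g 1 0, g 0 0]) (by
        ext i j; fin_cases i <;> fin_cases j <;>
          simp [Qmat, Matrix.mul_apply, Fin.sum_univ_two, Matrix.vecHead, Matrix.vecTail,
            Matrix.transpose_apply, Matrix.vecMul, dotProduct])]
      ext i j; fin_cases i <;> fin_cases j <;>
        simp [blk, Matrix.vecHead, Matrix.vecTail]
    have detA : IsUnit ((!![0, r; 1, -(g 0 0 * r)]).det) := by
      have hc : (!![0, r; 1, -(g 0 0 * r)]).det = -r := by
        rw [Matrix.det_fin_two_of]; ring
      rw [hc]; exact ((ub⁻¹ : Rˣ).isUnit).neg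
    have detV : IsUnit ((!![g 0 0, 1; g 1 0, 0]).det) := by
      rw [Matrix.det_fin_two_of]
      simpa [← hub] using (ub.isUnit).neg
    have hwexp : m1 !![0, r; 1, -(g 0 0 * r)] * g
        = !![1, r * g 1 1, r * g 1 2, r * g 1 3;
             0, g 0 1 - g 0 0 * r * g 1 1, g 0 2 - g 0 0 * r * g 1 2,
                g 0 3 - g 0 0 * r * g 1 3;
             g 3 0, g 3 1, g 3 2, g 3 3;
             g 1 0 * g 2 0 + g 0 0 * g 3 0, g 1 0 * g 2 1 + g 0 0 * g 3 1,
                g 1 0 * g 2 2 + g 0 0 * g 3 2, g 1 0 * g 2 3 + g 0 0 * g 3 3] := by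
      rw [hm1A]
      ext i j; fin_cases i <;> fin_cases j <;>
        simp [Matrix.mul_apply, Fin.sum_univ_four, Matrix.vecHead, Matrix.vecTail] <;>
        first
          | ring1
          | linear_combination hr
          | linear_combination -hr
          | linear_combination g 0 0 * hr
          | linear_combination -(g 0 0) * hr
    have hspw := hwexp ▸ Sp.mul (sp_m1 detA) hsp
    have hword15 := stepC hspw (by simp [Matrix.vecHead, Matrix.vecTail])
      (by simp [Matrix.vecHead, Matrix.vecTail])
    have hvu : m1 !![g 0 0, 1; g 1 0, 0] * m1 !![0, r; 1, -(g 0 0 * r)] = 1 := by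
      rw [m1_mul, hVA, m1_one]
    have hg' : g = m1 !![g 0 0, 1; g 1 0, 0] * (!![1, r * g 1 1, r * g 1 2, r * g 1 3;
             (0:R), g 0 1 - g 0 0 * r * g 1 1, g 0 2 - g 0 0 * r * g 1 2,
                g 0 3 - g 0 0 * r * g 1 3;
             g 3 0, g 3 1, g 3 2, g 3 3;
             g 1 0 * g 2 0 + g 0 0 * g 3 0, g 1 0 * g 2 1 + g 0 0 * g 3 1,
                g 1 0 * g 2 2 + g 0 0 * g 3 2, g 1 0 * g 2 3 + g 0 0 * g 3 3]) := by
      rw [← hwexp, ← mul_assoc, hvu, one_mul]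
    rw [hg']
    exact word_mul (word_m1 detV) hword15

set_option maxHeartbeats 1000000 in
lemma stepA2 {g : Matrix (Fin 4) (Fin 4) R} (hsp : Sp g)
    (h : IsUnit (g 2 0)) : Word 17 g := by
  have hdetS : (!![(0:R),1;-1,0]).det = 1 := by
    rw [Matrix.det_fin_two_of]; ring
  have hdetS' : (!![(0:R),-1;1,0]).det = 1 := by
    rw [Matrix.det_fin_two_of]; ring
  have hwexp : m2 !![(0:R),1;-1,0] * g
      = !![g 0 0, g 0 1, g 0 2, g 0 3;
           g 2 0, g 2 1, g 2 2, g 2 3;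
           -(g 1 0), -(g 1 1), -(g 1 2), -(g 1 3);
           g 3 0, g 3 1, g 3 2, g 3 3] := by
    ext i j; fin_cases i <;> fin_cases j <;>
      simp [m2, Matrix.mul_apply, Fin.sum_univ_four, Matrix.vecHead, Matrix.vecTail] <;>
      try ring1
  have hspw := hwexp ▸ Sp.mul (sp_m2 hdetS) hsp
  have hword16 := stepB hspw (Or.inr (by
    simpa [Matrix.vecHead, Matrix.vecTail] using h))
  have hvu : m2 !![(0:R),-1;1,0] * m2 !![(0:R),1;-1,0] = 1 := by
    rw [m2_mul]
    have : !![(0:R),-1;1,0] * !![(0:R),1;-1,0] = 1 := by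
      ext i j; fin_cases i <;> fin_cases j <;>
        simp [Matrix.mul_apply, Fin.sum_univ_two, Matrix.vecHead, Matrix.vecTail,
          Matrix.one_apply]
    rw [this, m2_one]
  have hg' : g = m2 !![(0:R),-1;1,0] * (!![g 0 0, g 0 1, g 0 2, g 0 3;
           g 2 0, g 2 1, g 2 2, g 2 3;
           -(g 1 0), -(g 1 1), -(g 1 2), -(g 1 3);
           g 3 0, g 3 1, g 3 2, g 3 3]) := by
    rw [← hwexp, ← mul_assoc, hvu, one_mul]
  rw [hg']
  exact word_mul (word_m2 hdetS') hword16

lemma col_unit [IsLocalRing R] {g : Matrix (Fin 4) (Fin 4) R} (hsp : Sp g) :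
    IsUnit (g 0 0) ∨ IsUnit (g 1 0) ∨ IsUnit (g 2 0) ∨ IsUnit (g 3 0) := by
  by_contra hc
  push_neg at hc
  obtain ⟨h0, h1, h2, h3⟩ := hc
  have key : g 0 0 * g 3 3 + g 1 0 * g 2 3 - g 2 0 * g 1 3 - g 3 0 * g 0 3 = 1 := by
    have h := congrFun (congrFun hsp 0) 3
    simp [Jmat, Matrix.mul_apply, Matrix.transpose_apply, Fin.sum_univ_four,
      Matrix.vecHead, Matrix.vecTail] at h
    first | linear_combination h | linear_combination -h
  have hmem : (1:R) ∈ IsLocalRing.maximalIdeal R := by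
    rw [← key]
    have m0 := (IsLocalRing.mem_maximalIdeal _).mpr (mem_nonunits_iff.mpr h0)
    have m1' := (IsLocalRing.mem_maximalIdeal _).mpr (mem_nonunits_iff.mpr h1)
    have m2' := (IsLocalRing.mem_maximalIdeal _).mpr (mem_nonunits_iff.mpr h2)
    have m3' := (IsLocalRing.mem_maximalIdeal _).mpr (mem_nonunits_iff.mpr h3)
    exact sub_mem (sub_mem (add_mem (Ideal.mul_mem_right _ _ m0)
      (Ideal.mul_mem_right _ _ m1')) (Ideal.mul_mem_right _ _ m2'))
      (Ideal.mul_mem_right _ _ m3')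
  exact (Ideal.ne_top_iff_one _).mp
    (Ideal.IsMaximal.ne_top (IsLocalRing.maximalIdeal.isMaximal R)) hmem

set_option maxHeartbeats 1000000 in
lemma reduction [IsLocalRing R] {g : Matrix (Fin 4) (Fin 4) R} (hsp : Sp g) :
    Word 18 g := by
  rcases col_unit hsp with h | h | h | h
  · exact word_pad (stepB hsp (Or.inl h)) (by norm_num)
  · exact word_pad (stepB hsp (Or.inr h)) (by norm_num)
  · exact word_pad (stepA2 hsp h) (by norm_num)
  · have hwexp : m1 (Qmat R) * g
        = !![g 1 0, g 1 1, g 1 2, g 1 3;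
             g 0 0, g 0 1, g 0 2, g 0 3;
             g 3 0, g 3 1, g 3 2, g 3 3;
             g 2 0, g 2 1, g 2 2, g 2 3] := by
      rw [m1Q]
      ext i j; fin_cases i <;> fin_cases j <;>
        simp [Matrix.mul_apply, Fin.sum_univ_four, Matrix.vecHead, Matrix.vecTail]
    have hspw := hwexp ▸ Sp.mul (sp_m1 detQ) hsp
    have hword17 := stepA2 hspw (by
      simpa [Matrix.vecHead, Matrix.vecTail] using h)
    have hvu : m1 (Qmat R) * m1 (Qmat R) = 1 := by
      rw [m1_mul, QQ, m1_one]
    have hg' : g = m1 (Qmat R) * (!![g 1 0, g 1 1, g 1 2, g 1 3;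
             g 0 0, g 0 1, g 0 2, g 0 3;
             g 3 0, g 3 1, g 3 2, g 3 3;
             g 2 0, g 2 1, g 2 2, g 2 3]) := by
      rw [← hwexp, ← mul_assoc, hvu, one_mul]
    rw [hg']
    exact word_mul (word_m1 detQ) hword17

end SpAux


/-- For `𝒪` the ring of integers of a non-archimedean local field (a complete discrete
valuation ring with finite residue field), `Sp₄(𝒪) = (K₁K₂)^30`: every element of `Sp₄(𝒪)` is
a product of 30 factors, each of the form `k₁k₂` with `k₁ ∈ K₁` and `k₂ ∈ K₂`. -/
theorem sp4_eq_K1K2_pow_thirty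
    (𝒪 : Type*) [CommRing 𝒪] [IsDomain 𝒪] [IsLocalRing 𝒪] [IsDiscreteValuationRing 𝒪]
    [Finite (IsLocalRing.ResidueField 𝒪)]
    [IsAdicComplete (IsLocalRing.maximalIdeal 𝒪) 𝒪]
    (g : Matrix (Fin 4) (Fin 4) 𝒪)
    (hg : g.transpose * Jmat 𝒪 * g = Jmat 𝒪) :
    ∃ k₁ k₂ : Fin 30 → Matrix (Fin 4) (Fin 4) 𝒪,
      (∀ i, memK1 (k₁ i)) ∧ (∀ i, memK2 (k₂ i)) ∧
      g = (List.ofFn fun i : Fin 30 => k₁ i * k₂ i).prod := by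
  exact SpAux.word_final (SpAux.word_pad (SpAux.reduction hg) (by norm_num))
end

section
/- Let F be a non-archimedean local field. For integers i ≥ j ≥ 0 and elements a, b, x, y ∈ 𝒪 define in Sp₄(F): β(a,b)⁻¹ = diag(π^i,1,1,π^{−i}) · U(a,b) where U(a,b) is the matrix with 1's on the diagonal, entry (2,1) = 1+πa, entry (4,1) = −πb, entry (4,3) = −(1+πa); and α(x,y) = V(x,y) · diag(π^{−j},1,1,π^j) where V(x,y) has 1's on the diagonal and entries (3,1) = x, (4,1) = πy + x, (4,2) = x. Then the 2×2 minor of β(a,b)⁻¹α(x,y) on rows {2,4} and columns {1,3} has absolute value q^{i+j}, i.e., ‖Λ²(β(a,b)⁻¹α(x,y))‖ ≥ q^{i+j}. -/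
/-- The key minor computation in the local estimate for the move `(i,j) ↦ (i+1, j−1)`: with
`β(a,b)⁻¹ = diag(π^i,1,1,π^{−i})·U(a,b)` and `α(x,y) = V(x,y)·diag(π^{−j},1,1,π^j)` as
indicated (entries `a, b, x, y ∈ 𝒪`), the 2×2 minor of `β(a,b)⁻¹α(x,y)` on rows {2,4} and
columns {1,3} has absolute value `q^{i+j}`; in particular `‖Λ²(β(a,b)⁻¹α(x,y))‖ ≥ q^{i+j}`. -/
theorem minor_rows24_cols13_abs_eq
    (F : Type*) [Field F] (v : AbsoluteValue F ℝ) (hv : IsNonarchimedean v)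
    (π : F) (q : ℝ) (hq : 1 < q) (hπ : v π = q⁻¹)
    (i j : ℤ) (hj : 0 ≤ j) (hij : j ≤ i)
    (a b x y : F) (ha : v a ≤ 1) (hb : v b ≤ 1) (hx : v x ≤ 1) (hy : v y ≤ 1)
    (βinv α g : Matrix (Fin 4) (Fin 4) F)
    (hβ : βinv = Matrix.diagonal ![π ^ i, 1, 1, π ^ (-i)] *
      !![1, 0, 0, 0;
         1 + π*a, 1, 0, 0;
         0, 0, 1, 0;
         -(π*b), 0, -(1 + π*a), 1])
    (hα : α = !![1, 0, 0, 0;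
                 0, 1, 0, 0;
                 x, 0, 1, 0;
                 π*y + x, x, 0, 1] *
      Matrix.diagonal ![π ^ (-j), 1, 1, π ^ j])
    (hg : g = βinv * α) :
    v (g 1 0 * g 3 2 - g 1 2 * g 3 0) = q ^ (i + j) := by
  have hq0 : (0:ℝ) < q := lt_trans one_pos hq
  have hπ0 : π ≠ 0 := by
    intro h; rw [h, map_zero] at hπ
    exact (inv_pos.mpr hq0).ne' hπ.symm
  have hM : g = !![π^i*π^(-j), 0, 0, 0;
      (1+π*a)*π^(-j), 1, 0, 0;
      x*π^(-j), 0, 1, 0;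
      π^(-i)*(π*y+x-π*b-(1+π*a)*x)*π^(-j), π^(-i)*x, -((1+π*a)*π^(-i)), π^(-i)*π^j] := by
    subst hg hβ hα
    ext r c
    fin_cases r <;> fin_cases c <;>
      simp [Matrix.mul_apply, Fin.sum_univ_four, Matrix.diagonal_apply, Matrix.vecMul,
        dotProduct] <;> ring
  rw [hM]
  have hminor : ((1:F)+π*a)*π^(-j) * -((1+π*a)*π^(-i)) - 0 * (π^(-i)*(π*y+x-π*b-(1+π*a)*x)*π^(-j))
      = -((1+π*a)^2 * (π^(-i) * π^(-j))) := by ring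
  have e10 : (!![π^i*π^(-j), 0, 0, 0;
      (1+π*a)*π^(-j), 1, 0, 0;
      x*π^(-j), 0, 1, 0;
      π^(-i)*(π*y+x-π*b-(1+π*a)*x)*π^(-j), π^(-i)*x, -((1+π*a)*π^(-i)), π^(-i)*π^j]
      : Matrix (Fin 4) (Fin 4) F) 1 0 = (1+π*a)*π^(-j) := by norm_num
  have e32 : (!![π^i*π^(-j), 0, 0, 0;
      (1+π*a)*π^(-j), 1, 0, 0;
      x*π^(-j), 0, 1, 0;
      π^(-i)*(π*y+x-π*b-(1+π*a)*x)*π^(-j), π^(-i)*x, -((1+π*a)*π^(-i)), π^(-i)*π^j]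
      : Matrix (Fin 4) (Fin 4) F) 3 2 = -((1+π*a)*π^(-i)) := by rfl
  have e12 : (!![π^i*π^(-j), 0, 0, 0;
      (1+π*a)*π^(-j), 1, 0, 0;
      x*π^(-j), 0, 1, 0;
      π^(-i)*(π*y+x-π*b-(1+π*a)*x)*π^(-j), π^(-i)*x, -((1+π*a)*π^(-i)), π^(-i)*π^j]
      : Matrix (Fin 4) (Fin 4) F) 1 2 = 0 := by rfl
  have e30 : (!![π^i*π^(-j), 0, 0, 0;
      (1+π*a)*π^(-j), 1, 0, 0;
      x*π^(-j), 0, 1, 0;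
      π^(-i)*(π*y+x-π*b-(1+π*a)*x)*π^(-j), π^(-i)*x, -((1+π*a)*π^(-i)), π^(-i)*π^j]
      : Matrix (Fin 4) (Fin 4) F) 3 0 = π^(-i)*(π*y+x-π*b-(1+π*a)*x)*π^(-j) := by rfl
  rw [e10, e32, e12, e30, hminor]
  -- now evaluate the absolute value
  have h1 : v (1 + π*a) = 1 := by
    have hπa : v (π*a) < 1 := by
      rw [map_mul, hπ]
      calc q⁻¹ * v a ≤ q⁻¹ * 1 := by
            apply mul_le_mul_of_nonneg_left ha (le_of_lt (inv_pos.mpr hq0))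
        _ = q⁻¹ := mul_one _
        _ < 1 := inv_lt_one_of_one_lt₀ hq
    have hle : v (1 + π*a) ≤ 1 := by
      have h0 := hv 1 (π*a)
      rw [map_one] at h0
      exact h0.trans (max_le le_rfl hπa.le)
    have hge : 1 ≤ v (1 + π*a) := by
      have h2 := hv (1 + π*a) (-(π*a))
      simp only [add_neg_cancel_right, map_one, map_neg_eq_map] at h2
      rcases max_cases (v (1 + π*a)) (v (π*a)) with ⟨he, _⟩ | ⟨he, _⟩
      · rw [he] at h2; exact h2
      · rw [he] at h2; exact absurd h2 (not_le_of_gt hπa)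
    linarith
  rw [v.map_neg, v.map_mul, v.map_pow, h1, one_pow, one_mul, v.map_mul,
    map_zpow₀ v, map_zpow₀ v, hπ]
  rw [← zpow_add₀ (by positivity : q⁻¹ ≠ 0), inv_zpow, ← zpow_neg, neg_add, neg_neg, neg_neg]
end
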